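/- Let H be a Hilbert space with subspaces (closed) H₁ ⊆ H₂. Let T : H₂ → H₂ be continuous and invertible with T(H₁) = H₁, and let L be a bounded linear functional on H₂ with Riesz representers α₁ ∈ H₁ and α₂ ∈ H₂ with respect to the weak inner product ⟨T·, T·⟩ (i.e., L(q) = ⟨Tαᵢ, Tq⟩ for all q ∈ Hᵢ). Let q₂ ∈ H₂ and let q₁ ∈ H₁ be the minimizer of ‖T(q₂) - T(q)‖ over q ∈ H₁. Then L(q₁) - L(q₂) = -⟨T(α₁) - T(α₂), T(q₁) - T(q₂)⟩. -/

import Mathlib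

open scoped RealInnerProductSpace

/-- Second-order model approximation error. With `H₂` the ambient
Hilbert space and `H₁ ⊆ H₂` a closed subspace, `T` invertible with `T(H₁) = H₁`,
`L` a bounded linear functional with weak-norm Riesz representers `α₁ ∈ H₁` (over
`H₁`) and `α₂` (over `H₂`), `q₂` arbitrary and `q₁ ∈ H₁` the minimizer of
`‖T q₂ - T q‖` over `q ∈ H₁`, one has
`L q₁ - L q₂ = -⟪T α₁ - T α₂, T q₁ - T q₂⟫`. -/
theorem model_approximation_error_second_order
    {E : Type*} [NormedAddCommGroup E] [InnerProductSpace ℝ E] [CompleteSpace E]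
    (H₁ : Submodule ℝ E) (hH₁ : IsClosed (H₁ : Set E))
    (T : E →L[ℝ] E) (Tinv : E →L[ℝ] E)
    (hT : T ∘L Tinv = 1 ∧ Tinv ∘L T = 1)
    (hTmap : Submodule.map (T : E →ₗ[ℝ] E) H₁ = H₁)
    (L : E →L[ℝ] ℝ)
    (α₁ α₂ : E) (hα₁mem : α₁ ∈ H₁)
    (hα₁ : ∀ q ∈ H₁, L q = ⟪T α₁, T q⟫)
    (hα₂ : ∀ q : E, L q = ⟪T α₂, T q⟫)
    (q₂ : E) (q₁ : E) (hq₁mem : q₁ ∈ H₁)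
    (hq₁ : ∀ q ∈ H₁, ‖T q₂ - T q₁‖ ≤ ‖T q₂ - T q‖) :
    L q₁ - L q₂ = -⟪T α₁ - T α₂, T q₁ - T q₂⟫ := by
  have hTq₁ : T q₁ ∈ H₁ := hTmap ▸ ⟨q₁, hq₁mem, rfl⟩
  have hTα₁ : T α₁ ∈ H₁ := hTmap ▸ ⟨α₁, hα₁mem, rfl⟩
  -- infimum characterization
  have hinf : ‖T q₂ - T q₁‖ = ⨅ w : (↑H₁ : Set E), ‖T q₂ - w‖ := by
    apply le_antisymm
    · apply le_ciInf
      rintro ⟨w, hw⟩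
      obtain ⟨q, hq, rfl⟩ := hTmap ▸ hw
      exact hq₁ q hq
    · exact ciInf_le ⟨0, by rintro x ⟨⟨w, hw⟩, rfl⟩; positivity⟩ (⟨T q₁, hTq₁⟩ : (↑H₁ : Set E))
  have horth := (Submodule.norm_eq_iInf_iff_real_inner_eq_zero H₁ hTq₁).1 hinf
  have h0 : ⟪T α₁, T q₁ - T q₂⟫ = 0 := by
    have := horth (T α₁) hTα₁
    rw [real_inner_comm] at this
    rw [show T q₁ - T q₂ = -(T q₂ - T q₁) from (neg_sub _ _).symm, inner_neg_right, this, neg_zero]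
  have h1 : L q₁ = ⟪T α₂, T q₁⟫ := hα₂ q₁
  have h2 : L q₂ = ⟪T α₂, T q₂⟫ := hα₂ q₂
  have := h0
  simp only [inner_sub_left, inner_sub_right] at this ⊢
  rw [h1, h2]; linarith
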